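/- Let ε ∈ (0,1), δ ∈ (0,1), and T ≥ 0 a natural number. Then the gain of the guided framework satisfies the exponential lower bound 𝒢(T) = ((1-ε·δ)/(1-ε))^T ≥ exp(T·ε·(1-δ)). -/
import Mathlib

/-- Exponential lower bound on the gain of the guided framework:
`𝒢(T) = ((1-ε·δ)/(1-ε))^T ≥ exp(T·ε·(1-δ))`. -/
theorem guided_gain_exp_lower_bound
    (ε δ : ℝ) (hε : ε ∈ Set.Ioo (0 : ℝ) 1) (hδ : δ ∈ Set.Ioo (0 : ℝ) 1)
    (T : ℕ) :
    ((1 - ε * δ) / (1 - ε)) ^ T ≥ Real.exp (T * (ε * (1 - δ))) := by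
  obtain ⟨hε0, hε1⟩ := hε
  obtain ⟨hδ0, hδ1⟩ := hδ
  set x := ε * (1 - δ) with hx
  have hx0 : 0 < x := mul_pos hε0 (by linarith)
  have hxε : x ≤ ε := by nlinarith
  have hx1 : x < 1 := lt_of_le_of_lt hxε hε1
  have h1ε : 0 < 1 - ε := by linarith
  have h1x : 0 < 1 - x := by linarith
  -- exp x ≤ 1/(1-x)
  have hexp : Real.exp x ≤ 1 / (1 - x) := by
    have h := Real.add_one_le_exp (-x)
    have : 1 - x ≤ Real.exp (-x) := by linarith
    rw [Real.exp_neg] at this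
    rw [le_div_iff₀ h1x]
    calc Real.exp x * (1 - x) ≤ Real.exp x * (Real.exp x)⁻¹ :=
          mul_le_mul_of_nonneg_left this (Real.exp_pos x).le
      _ = 1 := mul_inv_cancel₀ (Real.exp_pos x).ne'
  -- 1/(1-x) ≤ (1-εδ)/(1-ε)
  have hbase : 1 / (1 - x) ≤ (1 - ε * δ) / (1 - ε) := by
    rw [div_le_div_iff₀ h1x h1ε]
    nlinarith
  have hb : Real.exp x ≤ (1 - ε * δ) / (1 - ε) := hexp.trans hbase
  have : Real.exp (T * x) = Real.exp x ^ T := by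
    rw [← Real.exp_nat_mul]
  rw [ge_iff_le, this]
  exact pow_le_pow_left₀ (Real.exp_pos x).le hb T
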